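/- Let a ∈ ℂ be such that a is not an odd integer, and consider the 2×2 matrices X = [[0,0],[𝒊^(a+1) - 𝒊^(-a-1), 0]] and Y = [[0,1],[0,0]] acting on ℂ². Then every linear subspace of ℂ² invariant under both X and Y is either {0} or all of ℂ². (Equivalently, the representation I(a) of U_𝒊 sl(2) is irreducible.) -/

import Mathlib

open Matrix

/-- `ip x` is 𝒊^x := exp(xπ√-1/2). -/
noncomputable def ip (x : ℂ) : ℂ := Complex.exp (x * (Real.pi * Complex.I) / 2)

noncomputable def Xm (a : ℂ) : Matrix (Fin 2) (Fin 2) ℂ :=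
  !![0, 0; ip (a + 1) - ip (-a - 1), 0]
def Ym : Matrix (Fin 2) (Fin 2) ℂ := !![0, 1; 0, 0]

lemma c_ne_zero (a : ℂ) (ha : ¬ ∃ n : ℤ, a = 2 * n + 1) :
    ip (a + 1) - ip (-a - 1) ≠ 0 := by
  intro h
  apply ha
  have h1 : Complex.exp ((a + 1) * (Real.pi * Complex.I) / 2) =
      Complex.exp ((-a - 1) * (Real.pi * Complex.I) / 2) := by
    have := sub_eq_zero.mp h
    simpa [ip] using this
  have h2 : Complex.exp ((a + 1) * (Real.pi * Complex.I) / 2 -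
      (-a - 1) * (Real.pi * Complex.I) / 2) = 1 := by
    rw [Complex.exp_sub, h1, div_self (Complex.exp_ne_zero _)]
  rw [Complex.exp_eq_one_iff] at h2
  obtain ⟨n, hn⟩ := h2
  refine ⟨n - 1, ?_⟩
  have hπ : (Real.pi : ℂ) ≠ 0 := by
    exact_mod_cast Real.pi_ne_zero
  have hI : Complex.I ≠ 0 := Complex.I_ne_zero
  have : (a + 1) * (Real.pi * Complex.I) = n * (2 * Real.pi * Complex.I) := by
    field_simp at hn
    linear_combination (Real.pi * Complex.I / 2) * hn
  have := mul_right_cancel₀ hI (by linear_combination this :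
    ((a + 1) * Real.pi) * Complex.I = ((n : ℂ) * (2 * Real.pi)) * Complex.I)
  have := mul_right_cancel₀ hπ (by linear_combination this :
    (a + 1) * Real.pi = ((n : ℂ) * 2) * Real.pi)
  push_cast
  linear_combination this

/-- If a is not an odd integer, then the only subspaces of ℂ² invariant under
both X and Y are {0} and ℂ²; i.e. the representation I(a) of U_𝒊 sl(2) is
irreducible. -/
theorem stmt_7 (a : ℂ) (ha : ¬ ∃ n : ℤ, a = 2 * n + 1) :
    ∀ S : Submodule ℂ (Fin 2 → ℂ),
      (∀ v ∈ S, (Xm a).mulVec v ∈ S) →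
      (∀ v ∈ S, Ym.mulVec v ∈ S) →
      S = ⊥ ∨ S = ⊤ := by
  intro S hX hY
  by_cases hbot : S = ⊥
  · exact Or.inl hbot
  right
  set c := ip (a + 1) - ip (-a - 1) with hc
  have hc0 : c ≠ 0 := c_ne_zero a ha
  obtain ⟨v, hvS, hv0⟩ := Submodule.exists_mem_ne_zero_of_ne_bot hbot
  have hXv : ∀ w ∈ S, (![0, c * w 0] : Fin 2 → ℂ) ∈ S := by
    intro w hw
    have := hX w hw
    have hexp : (Xm a).mulVec w = ![0, c * w 0] := by
      funext i
      fin_cases i <;> simp [Xm, mulVec, dotProduct, Fin.sum_univ_two, hc]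
    rwa [hexp] at this
  have hYv : ∀ w ∈ S, (![w 1, 0] : Fin 2 → ℂ) ∈ S := by
    intro w hw
    have := hY w hw
    have hexp : Ym.mulVec w = ![w 1, 0] := by
      funext i
      fin_cases i <;> simp [Ym, mulVec, dotProduct, Fin.sum_univ_two]
    rwa [hexp] at this
  -- first get e1 ∈ S
  have he1 : (![0, 1] : Fin 2 → ℂ) ∈ S := by
    by_cases h0 : v 0 = 0
    · have h1 : v 1 ≠ 0 := by
        intro h1
        apply hv0
        funext i; fin_cases i <;> simp [h0, h1]
      have : ((v 1)⁻¹ : ℂ) • v ∈ S := S.smul_mem _ hvS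
      have hveq : ((v 1)⁻¹ : ℂ) • v = ![0, 1] := by
        funext i; fin_cases i <;> simp [h0, inv_mul_cancel₀ h1]
      rwa [hveq] at this
    · have h := hXv v hvS
      have : ((c * v 0)⁻¹ : ℂ) • (![0, c * v 0] : Fin 2 → ℂ) ∈ S :=
        S.smul_mem _ h
      have hveq : ((c * v 0)⁻¹ : ℂ) • (![0, c * v 0] : Fin 2 → ℂ) = ![0, 1] := by
        funext i; fin_cases i <;> simp <;> field_simp
      rwa [hveq] at this
  have he0 : (![1, 0] : Fin 2 → ℂ) ∈ S := by
    have := hYv _ he1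
    simpa using this
  rw [Submodule.eq_top_iff']
  intro w
  have : w = w 0 • (![1, 0] : Fin 2 → ℂ) + w 1 • ![0, 1] := by
    funext i; fin_cases i <;> simp
  rw [this]
  exact S.add_mem (S.smul_mem _ he0) (S.smul_mem _ he1)
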